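/- Let L be a lattice with smallest element 0 and → a W-implication on L. Define x' := x → 0. Then (L, ∨, ∧, ') is a weakly orthomodular lattice satisfying the double negation law (x')' = x. -/
import Mathlib


/-- A W-implication on a lattice with 0 yields, via x' := x → 0, a weakly orthomodular lattice
satisfying the double negation law. -/
theorem stmt_11 {L : Type*} [Lattice L] [OrderBot L] (impl : L → L → L)
    (h1 : ∀ x : L, impl (impl x ⊥) ⊥ = x)
    (h2 : ∀ x y : L, impl (impl (x ⊓ y) ⊥) x = x)
    (h3 : ∀ x y : L, (x ⊓ y) ⊔ impl x ⊥ = impl x y) :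
    (∀ x y : L, (x ⊓ y) ⊔ (x ⊓ impl (x ⊓ y) ⊥) = x) ∧
    (∀ x : L, impl (impl x ⊥) ⊥ = x) := by
  refine ⟨fun x y => ?_, h1⟩
  have h := h3 (impl (x ⊓ y) ⊥) x
  rw [h2, h1] at h
  rw [sup_comm, inf_comm]; exact h
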